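/- For every integer d ≥ 1 and every complex number s with Re(s) > d, the Dirichlet series Σ_{n≥1} j_n(ℤ^d) · n^{−s} converges and equals ζ(s) · ζ(s−1) ⋯ ζ(s−d+1), the product of the values of the Riemann zeta function at s, s−1, …, s−d+1. -/

import Mathlib

/-- `j_r(ℤ^d)`: the number of subgroups of index `r` in `ℤ^d`. -/
noncomputable def jZ (d r : ℕ) : ℕ :=
  Nat.card {H : AddSubgroup (Fin d → ℤ) // H.index = r}


open AddSubgroup

namespace JZaux

variable {M : Type*} [AddCommGroup M]

/-- The projection `M × ℤ →+ (M ⧸ K) × ℤ`. -/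
noncomputable def qmap (K : AddSubgroup M) : M × ℤ →+ (M ⧸ K) × ℤ :=
  ((QuotientAddGroup.mk' K).comp (AddMonoidHom.fst M ℤ)).prod (AddMonoidHom.snd M ℤ)

lemma qmap_apply (K : AddSubgroup M) (p : M × ℤ) : qmap K p = ((p.1 : M ⧸ K), p.2) := rfl

lemma qmap_surjective (K : AddSubgroup M) : Function.Surjective (qmap K) := by
  rintro ⟨c, t⟩
  obtain ⟨x, hx⟩ := QuotientAddGroup.mk'_surjective K c
  exact ⟨(x, t), by rw [qmap_apply, ← hx]; rfl⟩

/-- The subgroup of `M × ℤ` determined by `K ≤ M`, `a : ℕ` and a coset `c` of `K`. -/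
noncomputable def Hsub (K : AddSubgroup M) (a : ℕ) (c : M ⧸ K) : AddSubgroup (M × ℤ) :=
  (zmultiples ((c, (a : ℤ)) : (M ⧸ K) × ℤ)).comap (qmap K)

lemma mem_Hsub {K : AddSubgroup M} {a : ℕ} {c : M ⧸ K} {p : M × ℤ} :
    p ∈ Hsub K a c ↔ ∃ k : ℤ, k • c = (p.1 : M ⧸ K) ∧ k * a = p.2 := by
  simp only [Hsub, AddSubgroup.mem_comap, qmap_apply, mem_zmultiples_iff, Prod.smul_def,
    Prod.ext_iff, smul_eq_mul]

lemma index_zmultiples_prod {A : Type*} [AddCommGroup A] (c : A) (a : ℕ) (ha : a ≠ 0) :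
    (zmultiples ((c, (a : ℤ)) : A × ℤ)).index = Nat.card A * a := by
  haveI : NeZero a := ⟨ha⟩
  have ha' : 0 < (a : ℤ) := by exact_mod_cast Nat.pos_of_ne_zero ha
  set P := zmultiples ((c, (a : ℤ)) : A × ℤ) with hP
  have e : A × ZMod a ≃ (A × ℤ) ⧸ P := by
    refine Equiv.ofBijective (fun x => QuotientAddGroup.mk (x.1, (x.2.val : ℤ))) ⟨?_, ?_⟩
    · rintro ⟨u, j⟩ ⟨u', j'⟩ h
      rw [QuotientAddGroup.eq] at h
      obtain ⟨k, hk⟩ := mem_zmultiples_iff.mp h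
      simp only [Prod.smul_def, smul_eq_mul, Prod.neg_mk, Prod.mk_add_mk, Prod.mk.injEq] at hk
      obtain ⟨hk1, hk2⟩ := hk
      have hj : (j.val : ℤ) < a := by exact_mod_cast ZMod.val_lt j
      have hj' : (j'.val : ℤ) < a := by exact_mod_cast ZMod.val_lt j'
      have hj0 : (0:ℤ) ≤ j.val := Int.natCast_nonneg _
      have hj0' : (0:ℤ) ≤ j'.val := Int.natCast_nonneg _
      have hk0 : k = 0 := by
        have h1 : k < 1 := by nlinarith
        have h2 : -1 < k := by nlinarith
        omega
      subst hk0
      simp only [zero_smul, zero_mul] at hk1 hk2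
      have hu : u = u' := by
        have : -u + u' = 0 := hk1.symm
        rw [neg_add_eq_zero] at this
        exact this
      have hjj : j = j' := by
        have : (j.val : ℤ) = j'.val := by omega
        exact ZMod.val_injective a (by exact_mod_cast this)
      rw [hu, hjj]
    · rintro ⟨⟨x, t⟩⟩
      refine ⟨(x - (t / a) • c, ((t % a).toNat : ZMod a)), ?_⟩
      have hmod0 : 0 ≤ t % a := Int.emod_nonneg t (by positivity)
      have hmodlt : t % a < a := Int.emod_lt_of_pos t ha'
      have hval : ((((t % a).toNat : ZMod a)).val : ℤ) = t % a := by
        rw [ZMod.val_natCast_of_lt (by omega)]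
        omega
      show QuotientAddGroup.mk _ = QuotientAddGroup.mk _
      rw [QuotientAddGroup.eq]
      refine mem_zmultiples_iff.mpr ⟨t / a, ?_⟩
      simp only [Prod.smul_def, smul_eq_mul, Prod.neg_mk, Prod.mk_add_mk, Prod.mk.injEq]
      constructor
      · abel
      · have := Int.mul_ediv_add_emod t a
        have h2 : t / (a:ℤ) * a = a * (t / a) := mul_comm _ _
        omega
  rw [AddSubgroup.index, ← Nat.card_congr e, Nat.card_prod, Nat.card_zmod]

lemma index_Hsub (K : AddSubgroup M) (a : ℕ) (ha : a ≠ 0) (c : M ⧸ K) :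
    (Hsub K a c).index = K.index * a := by
  rw [Hsub, AddSubgroup.index_comap_of_surjective _ (qmap_surjective K),
    index_zmultiples_prod c a ha]
  rfl

end JZaux
-- appended to core
namespace JZaux
variable {M : Type*} [AddCommGroup M]
open AddSubgroup

lemma comap_inl_Hsub (K : AddSubgroup M) (a : ℕ) (ha : a ≠ 0) (c : M ⧸ K) :
    (Hsub K a c).comap (AddMonoidHom.inl M ℤ) = K := by
  ext x
  simp only [AddSubgroup.mem_comap, AddMonoidHom.inl_apply, mem_Hsub]
  constructor
  · rintro ⟨k, hc, hk⟩
    have ha' : (a : ℤ) ≠ 0 := by exact_mod_cast ha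
    have hk0 : k = 0 := by
      rcases mul_eq_zero.mp hk with h | h
      · exact h
      · exact absurd h ha'
    subst hk0
    rw [zero_smul] at hc
    exact (QuotientAddGroup.eq_zero_iff x).mp hc.symm
  · intro hx
    exact ⟨0, by simp [((QuotientAddGroup.eq_zero_iff x).mpr hx)]⟩

lemma map_snd_Hsub (K : AddSubgroup M) (a : ℕ) (c : M ⧸ K) :
    (Hsub K a c).map (AddMonoidHom.snd M ℤ) = zmultiples (a : ℤ) := by
  ext t
  simp only [AddSubgroup.mem_map, mem_Hsub, Int.mem_zmultiples_iff]
  constructor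
  · rintro ⟨⟨x, t'⟩, ⟨k, _, hk⟩, rfl⟩
    exact ⟨k, ((mul_comm (a:ℤ) k).trans hk).symm⟩
  · rintro ⟨k, rfl⟩
    obtain ⟨w, hw⟩ := QuotientAddGroup.mk'_surjective K (k • c)
    exact ⟨(w, (a : ℤ) * k), ⟨k, hw.symm, by ring⟩, rfl⟩

lemma out_mem_Hsub (K : AddSubgroup M) (a : ℕ) (c : M ⧸ K) :
    ((c.out, (a : ℤ)) : M × ℤ) ∈ Hsub K a c :=
  mem_Hsub.mpr ⟨1, by simp [QuotientAddGroup.out_eq'], by simp⟩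

lemma Hsub_inj_c {K : AddSubgroup M} {a : ℕ} (ha : a ≠ 0) {c c' : M ⧸ K}
    (h : Hsub K a c = Hsub K a c') : c = c' := by
  have hm := out_mem_Hsub K a c
  rw [h, mem_Hsub] at hm
  obtain ⟨k, hc, hk⟩ := hm
  have ha' : (a : ℤ) ≠ 0 := by exact_mod_cast ha
  have hk1 : k = 1 := by
    have : k * a = 1 * a := by rw [hk, one_mul]
    exact mul_right_cancel₀ ha' this
  subst hk1
  rw [one_smul] at hc
  rw [hc]
  exact (QuotientAddGroup.out_eq' c).symm

lemma natAbs_zmultiples (g : ℤ) : zmultiples ((g.natAbs : ℤ)) = zmultiples g := by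
  ext x
  simp only [Int.mem_zmultiples_iff, Int.natAbs_dvd]

/-- Every finite-index subgroup of `M × ℤ` is of the form `Hsub K a c`. -/
lemma exists_Hsub (H : AddSubgroup (M × ℤ)) (hH : H.index ≠ 0) :
    ∃ (a : ℕ) (c : M ⧸ (H.comap (AddMonoidHom.inl M ℤ))), a ≠ 0 ∧
      H = Hsub (H.comap (AddMonoidHom.inl M ℤ)) a c := by
  set K := H.comap (AddMonoidHom.inl M ℤ) with hK
  obtain ⟨g, hg⟩ := Int.subgroup_cyclic (H.map (AddMonoidHom.snd M ℤ))
  rw [← AddSubgroup.zmultiples_eq_closure] at hg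
  set a := g.natAbs with haDef
  have hga : H.map (AddMonoidHom.snd M ℤ) = zmultiples ((a : ℤ)) := by
    rw [hg, natAbs_zmultiples]
  have ha : a ≠ 0 := by
    intro h0
    rw [h0] at hga
    have hle : H ≤ (⊤ : AddSubgroup M).prod (⊥ : AddSubgroup ℤ) := by
      intro p hp
      refine AddSubgroup.mem_prod.mpr ⟨trivial, ?_⟩
      have : p.2 ∈ H.map (AddMonoidHom.snd M ℤ) := ⟨p, hp, rfl⟩
      rw [hga] at this
      simpa using Int.mem_zmultiples_iff.mp this
    have hdvd := AddSubgroup.index_dvd_of_le hle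
    have : ((⊤ : AddSubgroup M).prod (⊥ : AddSubgroup ℤ)).index = 0 := by
      simp [AddSubgroup.index_bot, Nat.card_eq_zero_of_infinite]
    rw [this] at hdvd
    exact hH (Nat.eq_zero_of_zero_dvd hdvd)
  have hmem : ((a : ℤ)) ∈ H.map (AddMonoidHom.snd M ℤ) := by
    rw [hga]; exact mem_zmultiples _
  obtain ⟨⟨w, t⟩, hwH, ht⟩ := hmem
  have htw : t = (a : ℤ) := ht
  subst htw
  refine ⟨a, (w : M ⧸ K), ha, ?_⟩
  ext ⟨x, t⟩
  rw [mem_Hsub]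
  constructor
  · intro hx
    have hts : t ∈ H.map (AddMonoidHom.snd M ℤ) := ⟨(x, t), hx, rfl⟩
    rw [hga] at hts
    obtain ⟨k, hk⟩ := Int.mem_zmultiples_iff.mp hts
    have hdiff : ((x, t) : M × ℤ) - k • (w, (a:ℤ)) ∈ H := sub_mem hx (zsmul_mem hwH k)
    have hd2 : (x - k • w, (0:ℤ)) ∈ H := by
      have : ((x, t) : M × ℤ) - k • (w, (a:ℤ)) = (x - k • w, t - k * a) := by
        simp [Prod.ext_iff, smul_eq_mul]
      rw [this] at hdiff
      have : t - k * a = 0 := by rw [hk]; ring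
      rwa [this] at hdiff
    have hxk : x - k • w ∈ K := by
      rw [hK]
      exact AddSubgroup.mem_comap.mpr hd2
    refine ⟨k, ?_, by show k * (a:ℤ) = t; rw [hk]; ring⟩
    rw [← QuotientAddGroup.mk_zsmul, QuotientAddGroup.eq_iff_sub_mem]
    simpa [neg_sub] using neg_mem hxk
  · rintro ⟨k, hc, hk⟩
    have hxk : x - k • w ∈ K := by
      rw [← QuotientAddGroup.eq_iff_sub_mem]
      rw [← QuotientAddGroup.mk_zsmul] at hc
      exact hc.symm
    have hd2 : (x - k • w, (0:ℤ)) ∈ H := AddSubgroup.mem_comap.mp hxk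
    have h2 : k * (a:ℤ) = t := hk
    have : ((x, t) : M × ℤ) = (x - k • w, (0:ℤ)) + k • (w, (a:ℤ)) := by
      refine Prod.ext ?_ ?_
      · show x = x - k • w + k • w
        abel
      · show t = 0 + k * (a:ℤ)
        omega
    rw [this]
    exact add_mem hd2 (zsmul_mem hwH k)

end JZaux
namespace JZaux
variable {M : Type*} [AddCommGroup M]
open AddSubgroup

lemma card_sigma_eq {ι : Type*} [Fintype ι] (f : ι → Type*) [∀ i, Finite (f i)] :
    Nat.card (Σ i, f i) = ∑ i, Nat.card (f i) := by
  classical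
  have h : ∀ i, Fintype (f i) := fun i => Fintype.ofFinite _
  simp only [Nat.card_eq_fintype_card]
  exact Fintype.card_sigma

lemma card_index_eq (n : ℕ) (hn : n ≠ 0)
    (hfin : ∀ b : ℕ, b ≠ 0 → Finite {K : AddSubgroup M // K.index = b}) :
    Nat.card {H : AddSubgroup (M × ℤ) // H.index = n}
      = ∑ p ∈ n.divisorsAntidiagonal,
          Nat.card {K : AddSubgroup M // K.index = p.1} * p.1 := by
  classical
  -- the parametrizing type
  let D := Σ (p : {p : ℕ × ℕ // p ∈ n.divisorsAntidiagonal})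
    (K : {K : AddSubgroup M // K.index = p.1.1}), M ⧸ (K.1 : AddSubgroup M)
  have hb : ∀ p : {p : ℕ × ℕ // p ∈ n.divisorsAntidiagonal}, p.1.1 ≠ 0 := fun p =>
    Nat.ne_zero_of_mul_ne_zero_left
      (((Nat.mem_divisorsAntidiagonal.mp p.2).1).symm ▸ hn)
  have ha : ∀ p : {p : ℕ × ℕ // p ∈ n.divisorsAntidiagonal}, p.1.2 ≠ 0 := fun p =>
    Nat.ne_zero_of_mul_ne_zero_left <| by
      rw [mul_comm, (Nat.mem_divisorsAntidiagonal.mp p.2).1]; exact hn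
  let Ψ : D → {H : AddSubgroup (M × ℤ) // H.index = n} := fun x =>
    ⟨Hsub x.2.1.1 x.1.1.2 x.2.2, by
      rw [index_Hsub _ _ (ha x.1) _, x.2.1.2]
      exact (Nat.mem_divisorsAntidiagonal.mp x.1.2).1⟩
  have hbij : Function.Bijective Ψ := by
    constructor
    · rintro ⟨⟨⟨b, a⟩, hp⟩, ⟨K, hK⟩, c⟩ ⟨⟨⟨b', a'⟩, hp'⟩, ⟨K', hK'⟩, c'⟩ h
      have hH : Hsub K a c = Hsub K' a' c' := congrArg Subtype.val h
      have haa : a = a' := by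
        have h1 := map_snd_Hsub K a c
        have h2 := map_snd_Hsub K' a' c'
        rw [hH, h2] at h1
        have d1 : (a' : ℤ) ∣ a := Int.mem_zmultiples_iff.mp (h1 ▸ mem_zmultiples ((a:ℤ)))
        have d2 : (a : ℤ) ∣ a' := Int.mem_zmultiples_iff.mp (h1.symm ▸ mem_zmultiples ((a':ℤ)))
        exact Nat.dvd_antisymm (by exact_mod_cast d2) (by exact_mod_cast d1)
      subst haa
      have ha0 : a ≠ 0 := ha ⟨(b, a), hp⟩
      have hbb : b = b' := by
        have e1 := (Nat.mem_divisorsAntidiagonal.mp hp).1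
        have e2 := (Nat.mem_divisorsAntidiagonal.mp hp').1
        exact Nat.eq_of_mul_eq_mul_right (Nat.pos_of_ne_zero ha0) (e1.trans e2.symm)
      subst hbb
      have hKK : K = K' := by
        have r1 := comap_inl_Hsub K a ha0 c
        have r2 := comap_inl_Hsub K' a ha0 c'
        rw [← r1, ← r2, hH]
      subst hKK
      have hcc : c = c' := Hsub_inj_c ha0 hH
      subst hcc
      rfl
    · rintro ⟨H, hH⟩
      have hH0 : H.index ≠ 0 := hH ▸ hn
      obtain ⟨a, c, ha0, hEq⟩ := exists_Hsub H hH0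
      have hidx : (H.comap (AddMonoidHom.inl M ℤ)).index * a = n := by
        rw [← index_Hsub _ _ ha0 c, ← hEq, hH]
      have hmem : ((H.comap (AddMonoidHom.inl M ℤ)).index, a) ∈ n.divisorsAntidiagonal :=
        Nat.mem_divisorsAntidiagonal.mpr ⟨hidx, hn⟩
      exact ⟨⟨⟨((H.comap (AddMonoidHom.inl M ℤ)).index, a), hmem⟩,
        ⟨H.comap (AddMonoidHom.inl M ℤ), rfl⟩, c⟩, Subtype.ext hEq.symm⟩
  have hcard : Nat.card {H : AddSubgroup (M × ℤ) // H.index = n} = Nat.card D :=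
    (Nat.card_congr (Equiv.ofBijective Ψ hbij)).symm
  rw [hcard]
  haveI : ∀ p : {p : ℕ × ℕ // p ∈ n.divisorsAntidiagonal},
      Finite {K : AddSubgroup M // K.index = p.1.1} := fun p => hfin _ (hb p)
  haveI : ∀ (p : {p : ℕ × ℕ // p ∈ n.divisorsAntidiagonal})
      (K : {K : AddSubgroup M // K.index = p.1.1}), Finite (M ⧸ (K.1 : AddSubgroup M)) := by
    intro p K
    haveI : (K.1).FiniteIndex := ⟨by rw [K.2]; exact hb p⟩
    infer_instance
  have step1 : Nat.card D = ∑ p : {p : ℕ × ℕ // p ∈ n.divisorsAntidiagonal},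
      Nat.card (Σ (K : {K : AddSubgroup M // K.index = p.1.1}), M ⧸ (K.1 : AddSubgroup M)) :=
    card_sigma_eq _
  rw [step1]
  have step2 : ∀ p : {p : ℕ × ℕ // p ∈ n.divisorsAntidiagonal},
      Nat.card (Σ (K : {K : AddSubgroup M // K.index = p.1.1}), M ⧸ (K.1 : AddSubgroup M))
        = Nat.card {K : AddSubgroup M // K.index = p.1.1} * p.1.1 := by
    intro p
    haveI := hfin _ (hb p)
    haveI : Fintype {K : AddSubgroup M // K.index = p.1.1} := Fintype.ofFinite _
    rw [card_sigma_eq]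
    have : ∀ K : {K : AddSubgroup M // K.index = p.1.1},
        Nat.card (M ⧸ (K.1 : AddSubgroup M)) = p.1.1 := fun K => K.2
    rw [Finset.sum_congr rfl (fun K _ => this K), Finset.sum_const, Finset.card_univ,
      Nat.card_eq_fintype_card, smul_eq_mul]
  rw [Finset.sum_congr rfl (fun p _ => step2 p)]
  exact Finset.sum_coe_sort n.divisorsAntidiagonal
    (fun p => Nat.card {K : AddSubgroup M // K.index = p.1} * p.1)

end JZaux
namespace JZaux
open AddSubgroup

/-- Transfer subgroup counting along an `AddEquiv`. -/
def subgroupIndexEquiv {G G' : Type*} [AddGroup G] [AddGroup G'] (e : G ≃+ G') (r : ℕ) :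
    {H : AddSubgroup G // H.index = r} ≃ {H : AddSubgroup G' // H.index = r} where
  toFun H := ⟨H.1.map e.toAddMonoidHom, by
    rw [AddSubgroup.index_map_eq _ e.surjective
      (by rw [(AddMonoidHom.ker_eq_bot_iff _).mpr e.injective]; exact bot_le)]
    exact H.2⟩
  invFun H := ⟨H.1.map e.symm.toAddMonoidHom, by
    rw [AddSubgroup.index_map_eq _ e.symm.surjective
      (by rw [(AddMonoidHom.ker_eq_bot_iff _).mpr e.symm.injective]; exact bot_le)]
    exact H.2⟩
  left_inv H := Subtype.ext (by ext x; simp [AddSubgroup.mem_map])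
  right_inv H := Subtype.ext (by ext x; simp [AddSubgroup.mem_map])

/-- Finiteness of the set of subgroups of a given nonzero index in `Fin d → ℤ`. -/
lemma finite_subgroups (d b : ℕ) (hb : b ≠ 0) :
    Finite {K : AddSubgroup (Fin d → ℤ) // K.index = b} := by
  haveI : NeZero b := ⟨hb⟩
  let φ : (Fin d → ℤ) →+ (Fin d → ZMod b) := (Int.castAddHom (ZMod b)).compLeft (Fin d)
  have hker : ∀ K : AddSubgroup (Fin d → ℤ), K.index = b → φ.ker ≤ K := by
    intro K hK x hx
    have hdvd : ∀ i, (b : ℤ) ∣ x i := by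
      intro i
      have : ((x i : ZMod b)) = 0 := congrFun hx i
      exact_mod_cast (ZMod.intCast_zmod_eq_zero_iff_dvd _ _).mp this
    choose y hy using hdvd
    have hxy : x = b • y := by
      funext i
      simp [hy i, mul_comm]
    rw [hxy, ← hK]
    exact AddSubgroup.nsmul_index_mem K y
  have hinj : Function.Injective
      (fun K : {K : AddSubgroup (Fin d → ℤ) // K.index = b} => K.1.map φ) := by
    intro K K' h
    have h1 : (K.1.map φ).comap φ = (K'.1.map φ).comap φ := by
      simp only at h
      rw [h]
    rw [AddSubgroup.comap_map_eq, AddSubgroup.comap_map_eq,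
      sup_of_le_left (hker K.1 K.2), sup_of_le_left (hker K'.1 K'.2)] at h1
    exact Subtype.ext h1
  haveI : Finite (AddSubgroup (Fin d → ZMod b)) :=
    Finite.of_injective (fun K : AddSubgroup (Fin d → ZMod b) => (K : Set (Fin d → ZMod b)))
      SetLike.coe_injective
  exact Finite.of_injective _ hinj

/-- Base case: `ℤ` has exactly one subgroup of each index `r ≠ 0`. -/
lemma card_index_int (r : ℕ) (hr : r ≠ 0) :
    Nat.card {H : AddSubgroup ℤ // H.index = r} = 1 := by
  rw [Nat.card_eq_one_iff_unique]
  constructor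
  · constructor
    rintro ⟨H, hH⟩ ⟨H', hH'⟩
    have key : ∀ H : AddSubgroup ℤ, H.index = r → H = zmultiples ((r : ℤ)) := by
      intro H hH
      obtain ⟨g, hg⟩ := Int.subgroup_cyclic H
      rw [← AddSubgroup.zmultiples_eq_closure] at hg
      have : g.natAbs = r := by
        rw [← hH, hg, Int.index_zmultiples]
      rw [hg, ← natAbs_zmultiples, this]
    exact Subtype.ext ((key H hH).trans (key H' hH').symm)
  · exact ⟨⟨zmultiples ((r : ℤ)), by rw [Int.index_zmultiples]; simp⟩⟩

end JZaux
namespace JZaux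
open AddSubgroup

/-- `Fin 1 → ℤ` is `ℤ`. -/
def eOne : (Fin 1 → ℤ) ≃+ ℤ :=
  { Equiv.funUnique (Fin 1) ℤ with map_add' := fun _ _ => rfl }

/-- Splitting off the first coordinate. -/
def eSucc (d : ℕ) : (Fin (d + 1) → ℤ) ≃+ (Fin d → ℤ) × ℤ :=
  { (Fin.consEquiv (fun _ : Fin (d + 1) => ℤ)).symm.trans (Equiv.prodComm ℤ (Fin d → ℤ)) with
    map_add' := fun _ _ => rfl }

lemma jZ_one {r : ℕ} (hr : r ≠ 0) : jZ 1 r = 1 := by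
  rw [jZ, Nat.card_congr (subgroupIndexEquiv eOne r), card_index_int r hr]

lemma jZ_succ (d : ℕ) {n : ℕ} (hn : n ≠ 0) :
    jZ (d + 1) n = ∑ p ∈ n.divisorsAntidiagonal, jZ d p.1 * p.1 := by
  rw [jZ, Nat.card_congr (subgroupIndexEquiv (eSucc d) n),
    card_index_eq n hn (finite_subgroups d)]
  rfl

lemma term_shift (f : ℕ → ℂ) (s : ℂ) (n : ℕ) :
    LSeries.term (fun m => (m : ℂ) * f m) s n = LSeries.term f (s - 1) n := by
  rcases eq_or_ne n 0 with rfl | hn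
  · simp
  · rw [LSeries.term_of_ne_zero hn, LSeries.term_of_ne_zero hn]
    have hn' : (n : ℂ) ≠ 0 := Nat.cast_ne_zero.mpr hn
    rw [Complex.cpow_sub _ _ hn', Complex.cpow_one, div_div_eq_mul_div]
    ring

lemma key (d : ℕ) (hd : 1 ≤ d) : ∀ s : ℂ, (d : ℝ) < s.re →
    LSeriesHasSum (fun n => (jZ d n : ℂ)) s
      (∏ i ∈ Finset.range d, riemannZeta (s - (i : ℂ))) := by
  induction d, hd using Nat.le_induction with
  | base =>
    intro s hs
    have h1 : (1 : ℝ) < s.re := by exact_mod_cast hs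
    have h0 := LSeriesHasSum_one h1
    have hterm : ∀ n : ℕ, LSeries.term (fun n => (jZ 1 n : ℂ)) s n = LSeries.term 1 s n :=
      fun n => LSeries.term_congr (fun hn => by rw [jZ_one hn]; simp) s n
    have hp : (∏ i ∈ Finset.range 1, riemannZeta (s - (i : ℂ))) = riemannZeta s := by
      simp
    rw [hp]
    show HasSum (LSeries.term (fun n => (jZ 1 n : ℂ)) s) (riemannZeta s)
    rw [funext hterm]
    exact h0
  | succ d hd ih =>
    intro s hs
    have hre : (d : ℝ) < (s - 1).re := by
      rw [Complex.sub_re, Complex.one_re]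
      push_cast at hs
      linarith
    have h2 := ih (s - 1) hre
    have h3 : LSeriesHasSum (fun n => (n : ℂ) * (jZ d n : ℂ)) s
        (∏ i ∈ Finset.range d, riemannZeta (s - 1 - (i : ℂ))) := by
      show HasSum (LSeries.term (fun n => (n : ℂ) * (jZ d n : ℂ)) s) _
      rw [funext (term_shift (fun n => (jZ d n : ℂ)) s)]
      exact h2
    have h1 : (1 : ℝ) < s.re := by
      push_cast at hs
      have : (1 : ℝ) ≤ d := by exact_mod_cast hd
      linarith
    have h4 := (LSeriesHasSum_one h1).convolution h3
    have hterm : ∀ {n : ℕ}, n ≠ 0 →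
        ((jZ (d + 1) n : ℂ)) = (LSeries.convolution (1 : ℕ → ℂ) (fun m => (m : ℂ) * (jZ d m : ℂ))) n := by
      intro n hn
      rw [LSeries.convolution_def, jZ_succ d hn]
      push_cast
      simp only [Pi.one_apply, one_mul]
      rw [Nat.sum_divisorsAntidiagonal (f := fun a _ => (jZ d a : ℂ) * (a : ℂ)),
        Nat.sum_divisorsAntidiagonal' (f := fun _ b => ((b : ℂ) * (jZ d b : ℂ)))]
      refine Finset.sum_congr rfl fun i _ => ?_
      ring
    have hprod : (∏ i ∈ Finset.range (d + 1), riemannZeta (s - (i : ℂ)))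
        = riemannZeta s * ∏ i ∈ Finset.range d, riemannZeta (s - 1 - (i : ℂ)) := by
      rw [Finset.prod_range_succ']
      simp only [Nat.cast_zero, sub_zero]
      rw [mul_comm]
      congr 1
      refine Finset.prod_congr rfl fun i _ => ?_
      congr 1
      push_cast
      ring
    rw [hprod]
    show HasSum (LSeries.term (fun n => (jZ (d + 1) n : ℂ)) s) _
    rw [funext fun n => LSeries.term_congr (fun hn => hterm hn) s n]
    exact h4

end JZaux
/-- Formula (1-10): for `Re(s) > d`, the Dirichlet series `Σ_{n≥1} j_n(ℤ^d)/n^s` converges to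
`ζ(s)·ζ(s-1)⋯ζ(s-d+1)`. -/
theorem hasSum_jZ_div_cpow (d : ℕ) (hd : 1 ≤ d) (s : ℂ) (hs : (d : ℝ) < s.re) :
    HasSum (fun n : ℕ => (jZ d (n + 1) : ℂ) * ((n + 1 : ℕ) : ℂ) ^ (-s))
      (∏ i ∈ Finset.range d, riemannZeta (s - (i : ℂ))) := by
  have hkey : HasSum (LSeries.term (fun n => (jZ d n : ℂ)) s)
      (∏ i ∈ Finset.range d, riemannZeta (s - (i : ℂ))) := JZaux.key d hd s hs
  have h1 : HasSum (fun n : ℕ => LSeries.term (fun n => (jZ d n : ℂ)) s (n + 1))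
      (∏ i ∈ Finset.range d, riemannZeta (s - (i : ℂ))) := by
    rw [hasSum_nat_add_iff 1]
    simpa using hkey
  have hfun : ∀ n : ℕ, LSeries.term (fun n => (jZ d n : ℂ)) s (n + 1)
      = (jZ d (n + 1) : ℂ) * ((n + 1 : ℕ) : ℂ) ^ (-s) := by
    intro n
    rw [LSeries.term_of_ne_zero (Nat.succ_ne_zero n), Complex.cpow_neg, div_eq_mul_inv]
  rw [show (fun n : ℕ => (jZ d (n + 1) : ℂ) * ((n + 1 : ℕ) : ℂ) ^ (-s))
      = fun n : ℕ => LSeries.term (fun n => (jZ d n : ℂ)) s (n + 1) from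
    funext fun n => (hfun n).symm]
  exact h1
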